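/- Let γ₁, γ₂, β > 0, m ∈ ℕ, and define φ_m : ℝ³ → ℝ by φ_m(x) = C_m·x₃^m·exp(−(γ₁x₁² + γ₂x₂² + βx₃²)/2), where C_m² = (√(γ₁γ₂)/π)·β^(m+1/2)/Γ(m+1/2). Then for the partially repulsive potential V(x) = (1/2)(γ₁²x₁² + γ₂²x₂² − β²x₃²) one has ∫_{ℝ³} V(x)·φ_m(x)² dx = −β·m/2 + (γ₁+γ₂−β)/4. In particular this potential energy tends to −∞ linearly in m. -/

import Mathlib

open MeasureTheory

lemma aux_integrable {b : ℝ} (hb : 0 < b) (k : ℕ) :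
    Integrable (fun x : ℝ => x ^ (2 * k) * Real.exp (-b * x ^ 2)) := by
  have h := integrable_rpow_mul_exp_neg_mul_sq hb
    (s := ((2 * k : ℕ) : ℝ)) (neg_one_lt_zero.trans_le (Nat.cast_nonneg _))
  simpa only [Real.rpow_natCast] using h

lemma aux_moment {b : ℝ} (hb : 0 < b) (k : ℕ) :
    ∫ x : ℝ, x ^ (2 * k) * Real.exp (-b * x ^ 2)
      = Real.Gamma ((k : ℝ) + 1 / 2) / b ^ ((k : ℝ) + 1 / 2) := by
  have habs : ∀ x : ℝ, x ^ (2 * k) * Real.exp (-b * x ^ 2)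
      = |x| ^ (2 * k) * Real.exp (-b * |x| ^ 2) := by
    intro x
    rw [pow_abs, abs_of_nonneg ((even_two_mul k).pow_nonneg x), sq_abs]
  have h2 : (∫ x : ℝ, x ^ (2 * k) * Real.exp (-b * x ^ 2))
      = 2 * ∫ y in Set.Ioi (0 : ℝ), y ^ (2 * k) * Real.exp (-b * y ^ 2) := by
    trans (∫ x : ℝ, (fun y : ℝ => y ^ (2 * k) * Real.exp (-b * y ^ 2)) |x|)
    · congr 1; funext x; exact habs x
    · exact integral_comp_abs (f := fun y : ℝ => y ^ (2 * k) * Real.exp (-b * y ^ 2))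
  rw [h2]
  have hcongr : (∫ y in Set.Ioi (0 : ℝ), y ^ (2 * k) * Real.exp (-b * y ^ 2))
      = ∫ y in Set.Ioi (0 : ℝ), y ^ ((2 * k : ℕ) : ℝ) * Real.exp (-b * y ^ (2 : ℝ)) := by
    refine setIntegral_congr_fun measurableSet_Ioi fun y hy => ?_
    rw [Real.rpow_natCast, show (2 : ℝ) = ((2 : ℕ) : ℝ) by norm_num, Real.rpow_natCast]
  rw [hcongr, integral_rpow_mul_exp_neg_mul_rpow (by norm_num)
    (neg_one_lt_zero.trans_le (Nat.cast_nonneg _)) hb]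
  rw [show (-(((2 * k : ℕ) : ℝ) + 1) / 2) = -((k : ℝ) + 1 / 2) by push_cast; ring,
    show ((((2 * k : ℕ) : ℝ) + 1) / 2) = (k : ℝ) + 1 / 2 by push_cast; ring,
    Real.rpow_neg hb.le]
  field_simp

theorem repulsive_trial_potential_energy
    (γ₁ γ₂ β : ℝ) (h₁ : 0 < γ₁) (h₂ : 0 < γ₂) (hβ : 0 < β) (m : ℕ)
    (Cm : ℝ)
    (hCm : Cm ^ 2 = Real.sqrt (γ₁ * γ₂) / Real.pi * β ^ ((m : ℝ) + 1 / 2) /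
      Real.Gamma ((m : ℝ) + 1 / 2))
    (φ : EuclideanSpace ℝ (Fin 3) → ℝ)
    (hφ : ∀ x : EuclideanSpace ℝ (Fin 3),
      φ x = Cm * (x 2) ^ m *
        Real.exp (-(γ₁ * (x 0) ^ 2 + γ₂ * (x 1) ^ 2 + β * (x 2) ^ 2) / 2)) :
    (∫ x : EuclideanSpace ℝ (Fin 3),
        (1 / 2) * (γ₁ ^ 2 * (x 0) ^ 2 + γ₂ ^ 2 * (x 1) ^ 2 - β ^ 2 * (x 2) ^ 2) *
          (φ x) ^ 2) = -β * m / 2 + (γ₁ + γ₂ - β) / 4 := by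
  -- transfer to the pi space
  rw [← ((EuclideanSpace.volume_preserving_symm_measurableEquiv_toLp (Fin 3)).symm).integral_comp'
      (fun x : EuclideanSpace ℝ (Fin 3) =>
        (1 / 2) * (γ₁ ^ 2 * (x 0) ^ 2 + γ₂ ^ 2 * (x 1) ^ 2 - β ^ 2 * (x 2) ^ 2) * (φ x) ^ 2)]
  simp only [hφ]
  have hcoord : ∀ (x : Fin 3 → ℝ) (i : Fin 3),
      (MeasurableEquiv.toLp 2 (Fin 3 → ℝ)).symm.symm x i = x i := fun _ _ => rfl
  simp only [hcoord]
  -- rewrite the integrand as a sum of three product terms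
  have hfun : (∫ x : Fin 3 → ℝ,
        1 / 2 * (γ₁ ^ 2 * x 0 ^ 2 + γ₂ ^ 2 * x 1 ^ 2 - β ^ 2 * x 2 ^ 2) *
          (Cm * x 2 ^ m * Real.exp (-(γ₁ * x 0 ^ 2 + γ₂ * x 1 ^ 2 + β * x 2 ^ 2) / 2)) ^ 2)
      = ∫ x : Fin 3 → ℝ,
        (Cm ^ 2 * γ₁ ^ 2 / 2) *
            (x 0 ^ 2 * Real.exp (-γ₁ * x 0 ^ 2) * Real.exp (-γ₂ * x 1 ^ 2) *
              (x 2 ^ (2 * m) * Real.exp (-β * x 2 ^ 2)))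
          + (Cm ^ 2 * γ₂ ^ 2 / 2) *
            (Real.exp (-γ₁ * x 0 ^ 2) * (x 1 ^ 2 * Real.exp (-γ₂ * x 1 ^ 2)) *
              (x 2 ^ (2 * m) * Real.exp (-β * x 2 ^ 2)))
          + (-(Cm ^ 2 * β ^ 2 / 2)) *
            (Real.exp (-γ₁ * x 0 ^ 2) * Real.exp (-γ₂ * x 1 ^ 2) *
              (x 2 ^ (2 * (m + 1)) * Real.exp (-β * x 2 ^ 2))) := by
    congr 1
    funext x
    have e1 : Real.exp (-(γ₁ * x 0 ^ 2 + γ₂ * x 1 ^ 2 + β * x 2 ^ 2) / 2) ^ 2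
        = Real.exp (-γ₁ * x 0 ^ 2) * Real.exp (-γ₂ * x 1 ^ 2) * Real.exp (-β * x 2 ^ 2) := by
      rw [sq, ← Real.exp_add, ← Real.exp_add, ← Real.exp_add]
      congr 1
      ring
    rw [mul_pow, mul_pow, e1]
    ring
  rw [hfun]
  -- integrability and product lemmas
  have prodInt : ∀ (f g h : ℝ → ℝ), Integrable f → Integrable g → Integrable h →
      Integrable (fun x : Fin 3 → ℝ => f (x 0) * g (x 1) * h (x 2)) := by
    intro f g h hf hg hh
    have := Integrable.fintype_prod (𝕜 := ℝ) (f := ![f, g, h]) (μ := fun _ => volume) (fun i => by fin_cases i <;> simpa)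
    simpa [Fin.prod_univ_three, volume_pi] using this
  have prodVal : ∀ (f g h : ℝ → ℝ),
      (∫ x : Fin 3 → ℝ, f (x 0) * g (x 1) * h (x 2))
        = (∫ a : ℝ, f a) * (∫ a : ℝ, g a) * (∫ a : ℝ, h a) := by
    intro f g h
    have := integral_fintype_prod_eq_prod (𝕜 := ℝ) (ι := Fin 3) (f := fun i => ![f, g, h] i) (μ := fun _ => volume)
    simpa [Fin.prod_univ_three, volume_pi] using this
  have ic0 : Integrable (fun a : ℝ => Real.exp (-γ₁ * a ^ 2)) := integrable_exp_neg_mul_sq h₁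
  have ic1 : Integrable (fun a : ℝ => Real.exp (-γ₂ * a ^ 2)) := integrable_exp_neg_mul_sq h₂
  have iq0 : Integrable (fun a : ℝ => a ^ 2 * Real.exp (-γ₁ * a ^ 2)) := by
    simpa using aux_integrable h₁ 1
  have iq1 : Integrable (fun a : ℝ => a ^ 2 * Real.exp (-γ₂ * a ^ 2)) := by
    simpa using aux_integrable h₂ 1
  have ip2 : Integrable (fun a : ℝ => a ^ (2 * m) * Real.exp (-β * a ^ 2)) := aux_integrable hβ m
  have iq2 : Integrable (fun a : ℝ => a ^ (2 * (m + 1)) * Real.exp (-β * a ^ 2)) :=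
    aux_integrable hβ (m + 1)
  have IP1 : Integrable (fun x : Fin 3 → ℝ =>
      x 0 ^ 2 * Real.exp (-γ₁ * x 0 ^ 2) * Real.exp (-γ₂ * x 1 ^ 2) *
        (x 2 ^ (2 * m) * Real.exp (-β * x 2 ^ 2))) := prodInt _ _ _ iq0 ic1 ip2
  have IP2 : Integrable (fun x : Fin 3 → ℝ =>
      Real.exp (-γ₁ * x 0 ^ 2) * (x 1 ^ 2 * Real.exp (-γ₂ * x 1 ^ 2)) *
        (x 2 ^ (2 * m) * Real.exp (-β * x 2 ^ 2))) := prodInt _ _ _ ic0 iq1 ip2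
  have IP3 : Integrable (fun x : Fin 3 → ℝ =>
      Real.exp (-γ₁ * x 0 ^ 2) * Real.exp (-γ₂ * x 1 ^ 2) *
        (x 2 ^ (2 * (m + 1)) * Real.exp (-β * x 2 ^ 2))) := prodInt _ _ _ ic0 ic1 iq2
  have IA : Integrable (fun x : Fin 3 → ℝ =>
      (Cm ^ 2 * γ₁ ^ 2 / 2) *
          (x 0 ^ 2 * Real.exp (-γ₁ * x 0 ^ 2) * Real.exp (-γ₂ * x 1 ^ 2) *
            (x 2 ^ (2 * m) * Real.exp (-β * x 2 ^ 2)))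
        + (Cm ^ 2 * γ₂ ^ 2 / 2) *
          (Real.exp (-γ₁ * x 0 ^ 2) * (x 1 ^ 2 * Real.exp (-γ₂ * x 1 ^ 2)) *
            (x 2 ^ (2 * m) * Real.exp (-β * x 2 ^ 2)))) :=
    (IP1.const_mul _).add (IP2.const_mul _)
  rw [integral_add IA (IP3.const_mul _),
    integral_add (IP1.const_mul _) (IP2.const_mul _),
    integral_const_mul, integral_const_mul, integral_const_mul]
  have V1 := prodVal (fun a => a ^ 2 * Real.exp (-γ₁ * a ^ 2))
    (fun a => Real.exp (-γ₂ * a ^ 2)) (fun a => a ^ (2 * m) * Real.exp (-β * a ^ 2))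
  have V2 := prodVal (fun a => Real.exp (-γ₁ * a ^ 2))
    (fun a => a ^ 2 * Real.exp (-γ₂ * a ^ 2)) (fun a => a ^ (2 * m) * Real.exp (-β * a ^ 2))
  have V3 := prodVal (fun a => Real.exp (-γ₁ * a ^ 2))
    (fun a => Real.exp (-γ₂ * a ^ 2)) (fun a => a ^ (2 * (m + 1)) * Real.exp (-β * a ^ 2))
  rw [V1, V2, V3]
  have hsne1 : Real.sqrt γ₁ ≠ 0 := (Real.sqrt_pos.mpr h₁).ne'
  have hsne2 : Real.sqrt γ₂ ≠ 0 := (Real.sqrt_pos.mpr h₂).ne'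
  have hΓpos : 0 < Real.Gamma ((m : ℝ) + 1 / 2) := Real.Gamma_pos_of_pos (by positivity)
  have hβepos : 0 < β ^ ((m : ℝ) + 1 / 2) := Real.rpow_pos_of_pos hβ _
  have E0 : (∫ a : ℝ, Real.exp (-γ₁ * a ^ 2)) = Real.sqrt (Real.pi / γ₁) := integral_gaussian γ₁
  have E1 : (∫ a : ℝ, Real.exp (-γ₂ * a ^ 2)) = Real.sqrt (Real.pi / γ₂) := integral_gaussian γ₂
  have Q0 : (∫ a : ℝ, a ^ 2 * Real.exp (-γ₁ * a ^ 2))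
      = Real.sqrt (Real.pi / γ₁) / (2 * γ₁) := by
    have h := aux_moment h₁ 1
    norm_num at h
    simp only [neg_mul]
    rw [h, show (3 / 2 : ℝ) = 1 / 2 + 1 by norm_num, Real.Gamma_add_one (by norm_num),
      Real.Gamma_one_half_eq, Real.rpow_add_one h₁.ne', ← Real.sqrt_eq_rpow,
      Real.sqrt_div Real.pi_pos.le]
    rw [div_div, div_eq_div_iff (by positivity) (by positivity)]
    ring
  have Q1 : (∫ a : ℝ, a ^ 2 * Real.exp (-γ₂ * a ^ 2))
      = Real.sqrt (Real.pi / γ₂) / (2 * γ₂) := by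
    have h := aux_moment h₂ 1
    norm_num at h
    simp only [neg_mul]
    rw [h, show (3 / 2 : ℝ) = 1 / 2 + 1 by norm_num, Real.Gamma_add_one (by norm_num),
      Real.Gamma_one_half_eq, Real.rpow_add_one h₂.ne', ← Real.sqrt_eq_rpow,
      Real.sqrt_div Real.pi_pos.le]
    rw [div_div, div_eq_div_iff (by positivity) (by positivity)]
    ring
  have Jv : (∫ a : ℝ, a ^ (2 * m) * Real.exp (-β * a ^ 2))
      = Real.Gamma ((m : ℝ) + 1 / 2) / β ^ ((m : ℝ) + 1 / 2) := aux_moment hβ m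
  have Kv : (∫ a : ℝ, a ^ (2 * (m + 1)) * Real.exp (-β * a ^ 2))
      = Real.Gamma ((m : ℝ) + 1 / 2) / β ^ ((m : ℝ) + 1 / 2) * (((m : ℝ) + 1 / 2) / β) := by
    rw [aux_moment hβ (m + 1)]
    push_cast
    rw [show ((m : ℝ) + 1) + 1 / 2 = ((m : ℝ) + 1 / 2) + 1 by ring,
      Real.Gamma_add_one (by positivity), Real.rpow_add_one hβ.ne']
    field_simp
  rw [E0, E1, Q0, Q1, Jv, Kv]
  have hsqrt : Real.sqrt (Real.pi / γ₁) * Real.sqrt (Real.pi / γ₂) * Real.sqrt (γ₁ * γ₂)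
      = Real.pi := by
    rw [← Real.sqrt_mul (by positivity), ← Real.sqrt_mul (by positivity),
      show Real.pi / γ₁ * (Real.pi / γ₂) * (γ₁ * γ₂) = Real.pi ^ 2 by field_simp]
    exact Real.sqrt_sq Real.pi_pos.le
  have hone : Cm ^ 2 * (Real.sqrt (Real.pi / γ₁) * Real.sqrt (Real.pi / γ₂) *
      (Real.Gamma ((m : ℝ) + 1 / 2) / β ^ ((m : ℝ) + 1 / 2))) = 1 := by
    rw [hCm]
    field_simp
    linarith [hsqrt]
  have expand : Cm ^ 2 * γ₁ ^ 2 / 2 *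
          ((Real.sqrt (Real.pi / γ₁) / (2 * γ₁) * Real.sqrt (Real.pi / γ₂)) *
            (Real.Gamma ((m : ℝ) + 1 / 2) / β ^ ((m : ℝ) + 1 / 2))) +
        Cm ^ 2 * γ₂ ^ 2 / 2 *
          ((Real.sqrt (Real.pi / γ₁) * (Real.sqrt (Real.pi / γ₂) / (2 * γ₂))) *
            (Real.Gamma ((m : ℝ) + 1 / 2) / β ^ ((m : ℝ) + 1 / 2))) +
      -(Cm ^ 2 * β ^ 2 / 2) *
        ((Real.sqrt (Real.pi / γ₁) * Real.sqrt (Real.pi / γ₂)) *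
          (Real.Gamma ((m : ℝ) + 1 / 2) / β ^ ((m : ℝ) + 1 / 2) * (((m : ℝ) + 1 / 2) / β)))
      = (γ₁ / 4 + γ₂ / 4 - β * ((m : ℝ) + 1 / 2) / 2) *
        (Cm ^ 2 * (Real.sqrt (Real.pi / γ₁) * Real.sqrt (Real.pi / γ₂) *
          (Real.Gamma ((m : ℝ) + 1 / 2) / β ^ ((m : ℝ) + 1 / 2)))) := by
    field_simp
    ring
  rw [expand, hone, mul_one]
  ring
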